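/- In a root-closed atomic reduced cancellative monoid, an atom is pure if and only if it is strong. -/

import Mathlib

/-- `x ≤_M y` : divisibility in the additive monoid `M`. -/
def MDvd {M : Type*} [AddCancelCommMonoid M] (x y : M) : Prop := ∃ z : M, y = x + z

/-- An atom: a nonzero element that is not the sum of two nonzero elements. -/
def IsAtomM {M : Type*} [AddCancelCommMonoid M] (a : M) : Prop :=
  a ≠ 0 ∧ ∀ b c : M, a = b + c → b = 0 ∨ c = 0

/-- A strong atom: a nonzero `x` such that `y ≤_M k • x` implies `y = l • x`. -/
def StrongAtom {M : Type*} [AddCancelCommMonoid M] (x : M) : Prop :=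
  x ≠ 0 ∧ ∀ (y : M) (k : ℕ), MDvd y (k • x) → ∃ l : ℕ, y = l • x

/-- A pure element: a nonzero `x` such that whenever a nonzero `y` satisfies
`y ≤_M k • x` for a positive `k`, then `m • x = n • y` for some positive `m`, `n`. -/
def PureElem {M : Type*} [AddCancelCommMonoid M] (x : M) : Prop :=
  x ≠ 0 ∧ ∀ (y : M) (k : ℕ), y ≠ 0 → 0 < k → MDvd y (k • x) →
    ∃ m n : ℕ, 0 < m ∧ 0 < n ∧ m • x = n • y

/-- `M` is atomic: every element is a finite sum of atoms. -/
def AtomicM (M : Type*) [AddCancelCommMonoid M] : Prop :=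
  ∀ x : M, ∃ l : Multiset M, (∀ a ∈ l, IsAtomM a) ∧ l.sum = x

/-- `M` is root-closed: `n • a ≤_M n • b` for a positive `n` implies `a ≤_M b`. -/
def RootClosedM (M : Type*) [AddCancelCommMonoid M] : Prop :=
  ∀ (n : ℕ) (a b : M), 0 < n → MDvd (n • a) (n • b) → MDvd a b

section Aux

variable {M : Type*} [AddCancelCommMonoid M]

lemma mdvd_trans' {x y z : M} (h1 : MDvd x y) (h2 : MDvd y z) : MDvd x z := by
  obtain ⟨u, rfl⟩ := h1; obtain ⟨v, rfl⟩ := h2; exact ⟨u + v, by rw [add_assoc]⟩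

lemma nsmul_eq_zero' (hred : ∀ a b : M, a + b = 0 → a = 0) {n : ℕ} (hn : n ≠ 0)
    {c : M} (h : n • c = 0) : c = 0 := by
  obtain ⟨k, rfl⟩ := Nat.exists_eq_succ_of_ne_zero hn
  rw [succ_nsmul, add_comm] at h
  exact hred _ _ h

lemma mdvd_antisymm' (hred : ∀ a b : M, a + b = 0 → a = 0) {x y : M}
    (h1 : MDvd x y) (h2 : MDvd y x) : x = y := by
  obtain ⟨u, hu⟩ := h1; obtain ⟨v, hv⟩ := h2
  rw [hu, add_assoc] at hv
  have huv : u + v = 0 := by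
    have : x + 0 = x + (u + v) := by rw [add_zero]; exact hv
    exact (add_left_cancel this).symm
  have hu0 : u = 0 := hred _ _ huv
  rw [hu, hu0, add_zero]

/-- An atom can't be a nontrivial multiple of anything (given reducedness). -/
lemma atom_eq_of_nsmul (hred : ∀ a b : M, a + b = 0 → a = 0) {b c : M}
    (hb : IsAtomM b) {n : ℕ} (hn : 1 < n) (h : b = n • c) : False := by
  obtain ⟨k, rfl⟩ := Nat.exists_eq_succ_of_ne_zero (by omega : n ≠ 0)
  rw [succ_nsmul] at h
  rcases hb.2 _ _ h with hc | hc
  · have hc0 : c = 0 := nsmul_eq_zero' hred (by omega) hc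
    rw [hc0, smul_zero, zero_add] at h
    exact hb.1 h
  · rw [hc, smul_zero, zero_add] at h
    exact hb.1 h

/-- key lemma: if `m • a = n • b` for atoms `a b` with `m, n > 0`, then `b = a`. -/
lemma atom_eq_of_smul_eq (hred : ∀ a b : M, a + b = 0 → a = 0) (hrc : RootClosedM M)
    {a b : M} (ha : IsAtomM a) (hb : IsAtomM b)
    {m n : ℕ} (hm : 0 < m) (hn : 0 < n) (h : m • a = n • b) : b = a := by
  -- reduce to the coprime case
  set d := Nat.gcd m n with hd
  have hd0 : 0 < d := Nat.gcd_pos_of_pos_left _ hm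
  set m₁ := m / d with hm1
  set n₁ := n / d with hn1
  have hm1pos : 0 < m₁ := Nat.div_pos (Nat.gcd_le_left _ hm) hd0
  have hn1pos : 0 < n₁ := Nat.div_pos (Nat.gcd_le_right _ hn) hd0
  have hcop : Nat.Coprime m₁ n₁ := Nat.coprime_div_gcd_div_gcd hd0
  have hmm : m = d * m₁ := (Nat.mul_div_cancel' (Nat.gcd_dvd_left m n)).symm
  have hnn : n = d * n₁ := (Nat.mul_div_cancel' (Nat.gcd_dvd_right m n)).symm
  have hkey : m₁ • a = n₁ • b := by
    have h' : d • (m₁ • a) = d • (n₁ • b) := by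
      rw [← mul_smul, ← mul_smul, ← hmm, ← hnn]; exact h
    exact mdvd_antisymm' hred (hrc d _ _ hd0 ⟨0, by rw [add_zero, h']⟩)
      (hrc d _ _ hd0 ⟨0, by rw [add_zero]; exact h'⟩)
  -- claim: m₁ = 1
  have hm1eq : m₁ = 1 := by
    by_contra hne
    have hm1gt : 1 < m₁ := by omega
    obtain ⟨s, -, hs⟩ := Nat.exists_mul_mod_eq_one_of_coprime hcop.symm hm1gt
    set q := n₁ * s / m₁ with hq
    have hqs : n₁ * s = m₁ * q + 1 := by
      rw [hq, ← hs]
      exact (Nat.div_add_mod _ _).symm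
    have e1 : (n₁ * s) • b = m₁ • (s • a) := by
      rw [mul_comm, mul_smul, hkey.symm, ← mul_smul, mul_comm, mul_smul]
    have e2 : (n₁ * s) • b = m₁ • (q • b) + b := by
      rw [hqs, add_smul, one_smul, mul_smul]
    have hdvd : MDvd (m₁ • (q • b)) (m₁ • (s • a)) := ⟨b, by rw [← e1, e2]⟩
    obtain ⟨c, hc⟩ := hrc m₁ _ _ (by omega) hdvd
    have : m₁ • (q • b) + b = m₁ • (q • b) + m₁ • c := by
      rw [← e2, e1, hc, smul_add]
    have hbc : b = m₁ • c := add_left_cancel this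
    exact atom_eq_of_nsmul hred hb hm1gt hbc
  rw [hm1eq, one_smul] at hkey
  -- now a = n₁ • b with a an atom, so n₁ = 1
  rcases Nat.lt_or_ge 1 n₁ with hgt | hle
  · exact absurd (atom_eq_of_nsmul hred ha hgt hkey) (fun h => h)
  · have : n₁ = 1 := by omega
    rw [this, one_smul] at hkey
    exact hkey.symm

lemma multiset_sum_const (a : M) :
    ∀ (l : Multiset M), (∀ b ∈ l, b = a) → l.sum = Multiset.card l • a := by
  intro l
  induction l using Multiset.induction with
  | empty => simp
  | cons x s ih =>
      intro h
      rw [Multiset.sum_cons, Multiset.card_cons, ih (fun b hb => h b (Multiset.mem_cons_of_mem hb)),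
        h x (Multiset.mem_cons_self x s), succ_nsmul, add_comm]

end Aux

/-- in a root-closed, atomic, reduced cancellative monoid, an atom is pure
iff it is strong. -/
theorem pure_iff_strong_of_rootClosed {M : Type*} [AddCancelCommMonoid M]
    (hred : ∀ a b : M, a + b = 0 → a = 0)
    (hatomic : AtomicM M) (hrc : RootClosedM M)
    (a : M) (ha : IsAtomM a) :
    PureElem a ↔ StrongAtom a := by
  classical
  constructor
  · rintro ⟨ha0, hp⟩
    refine ⟨ha0, fun y k hdvd => ?_⟩
    by_cases hy : y = 0
    · exact ⟨0, by rw [hy, zero_smul]⟩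
    have hk : 0 < k := by
      rcases Nat.eq_zero_or_pos k with rfl | h
      · exfalso
        obtain ⟨z, hz⟩ := hdvd
        rw [zero_smul] at hz
        exact hy (hred _ _ hz.symm)
      · exact h
    obtain ⟨l, hl, hsum⟩ := hatomic y
    have hall : ∀ b ∈ l, b = a := by
      intro b hbl
      have hb := hl b hbl
      have hby : MDvd b y := ⟨(l.erase b).sum, by
        rw [← hsum, ← Multiset.sum_cons, Multiset.cons_erase hbl]⟩
      have hbka : MDvd b (k • a) := mdvd_trans' hby hdvd
      obtain ⟨m, n, hm, hn, heq⟩ := hp b k hb.1 hk hbka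
      exact atom_eq_of_smul_eq hred hrc ha hb hm hn heq
    exact ⟨Multiset.card l, by rw [← hsum, multiset_sum_const a l hall]⟩
  · rintro ⟨ha0, hs⟩
    refine ⟨ha0, fun y k hy hk hdvd => ?_⟩
    obtain ⟨l, hl⟩ := hs y k hdvd
    have hl0 : 0 < l := by
      rcases Nat.eq_zero_or_pos l with rfl | h
      · exact absurd (by rw [hl, zero_smul]) hy
      · exact h
    exact ⟨l, 1, hl0, one_pos, by rw [one_smul, hl]⟩
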